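/- Let p* := (κ + (N−1)·σ − δ)/N, and consider the N-player game in which each peer i chooses x_i ≥ 0 and receives payoff π_i(x) = f(∑_{j=1}^N x_j) − κ·x_i − (p* + δ)·∑_{j≠i} x_j + (p* − σ)·(N−1)·x_i (the content production game under the linear pricing scheme with price p*, with full sharing y_i = x_i and full downloading substituted in). Then: (a) p* + δ = β = κ + (N−1)·σ − (N−1)·p*, and consequently π_i(x) = f(∑_{j=1}^N x_j) − β·∑_{j=1}^N x_j for every x ∈ ℝ_+^N and every i; (b) x ∈ ℝ_+^N is a Nash equilibrium (for each i, x_i maximizes π_i over [0,∞) given x_{−i}) if and only if ∑_{j=1}^N x_j = x̂_β; (c) at every Nash equilibrium, each peer's payoff equals f*(β). -/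

import Mathlib

open Filter Finset

/-- The benefit function `f` with its first and second derivatives, together with
the maximizer map `α ↦ x̂_α` (the unique `x ≥ 0` with `f'(x̂_α) = α` for `α ∈ (0, f'(0)]`). -/
structure BenefitFun where
  f : ℝ → ℝ
  f' : ℝ → ℝ
  f'' : ℝ → ℝ
  xhat : ℝ → ℝ
  f_zero : f 0 = 0
  f_nonneg : ∀ x : ℝ, 0 ≤ x → 0 ≤ f x
  hasDeriv : ∀ x ∈ Set.Ici (0:ℝ), HasDerivWithinAt f (f' x) (Set.Ici 0) x
  hasDeriv' : ∀ x ∈ Set.Ici (0:ℝ), HasDerivWithinAt f' (f'' x) (Set.Ici 0) x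
  cont_f'' : ContinuousOn f'' (Set.Ici 0)
  f'_pos : ∀ x : ℝ, 0 < x → 0 < f' x
  f''_neg : ∀ x : ℝ, 0 < x → f'' x < 0
  f'_tendsto : Filter.Tendsto f' Filter.atTop (nhds 0)
  xhat_nonneg : ∀ α : ℝ, 0 < α → α ≤ f' 0 → 0 ≤ xhat α
  xhat_spec : ∀ α : ℝ, 0 < α → α ≤ f' 0 → f' (xhat α) = α
  xhat_unique : ∀ α : ℝ, 0 < α → α ≤ f' 0 → ∀ x : ℝ, 0 ≤ x → f' x = α → x = xhat α
  xhat_max : ∀ α : ℝ, 0 < α → α ≤ f' 0 → ∀ x : ℝ, 0 ≤ x → f x - α * x ≤ f (xhat α) - α * xhat α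

/-- `f*(α) = f(x̂_α) − α·x̂_α = sup_{x ≥ 0} (f(x) − α x)`. -/
noncomputable def BenefitFun.fstar (B : BenefitFun) (α : ℝ) : ℝ :=
  B.f (B.xhat α) - α * B.xhat α

/-- `β̃(n) = (1/n)·κ + ((n−1)/n)·(δ+σ)`. -/
noncomputable def btilde (κ δ σ : ℝ) (n : ℕ) : ℝ :=
  (1 / (n:ℝ)) * κ + (((n:ℝ) - 1) / (n:ℝ)) * (δ + σ)

/-- Peer `i`'s payoff in the content production game under the linear pricing scheme with
price `p` (full sharing and full downloading substituted in):
`πᵢ(x) = f(∑ⱼ xⱼ) − κ xᵢ − (p + δ)·∑_{j≠i} xⱼ + (p − σ)·(N−1)·xᵢ`. -/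
noncomputable def payoffP (B : BenefitFun) (κ δ σ p : ℝ) {N : ℕ}
    (x : Fin N → ℝ) (i : Fin N) : ℝ :=
  B.f (∑ j, x j) - κ * x i - (p + δ) * (∑ j ∈ Finset.univ.erase i, x j)
    + (p - σ) * ((N:ℝ) - 1) * x i



lemma aux_mono (B : BenefitFun) {β a b : ℝ} (ha : 0 ≤ a) (hab : a < b)
    (h : ∀ t, a < t → t < b → β < B.f' t) :
    B.f a - β * a < B.f b - β * b := by
  have hsub : Set.Icc a b ⊆ Set.Ici 0 := fun t ht => le_trans ha ht.1
  have hg : ∀ t ∈ Set.Ici (0:ℝ),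
      HasDerivWithinAt (fun u => B.f u - β * u) (B.f' t - β) (Set.Ici 0) t := by
    intro t ht
    exact ((B.hasDeriv t ht).sub (((hasDerivAt_id t).const_mul β).hasDerivWithinAt)).congr_deriv (by ring)
  have hmono : StrictMonoOn (fun u => B.f u - β * u) (Set.Icc a b) := by
    apply strictMonoOn_of_hasDerivWithinAt_pos (f' := fun t => B.f' t - β) (convex_Icc a b)
    · exact fun t ht => ((hg t (hsub ht)).continuousWithinAt).mono hsub
    · exact fun t ht => (hg t (hsub (interior_subset ht))).mono (interior_subset.trans hsub)
    · intro t ht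
      rw [interior_Icc] at ht
      exact sub_pos.2 (h t ht.1 ht.2)
  exact hmono (Set.left_mem_Icc.2 hab.le) (Set.right_mem_Icc.2 hab.le) hab

lemma aux_anti (B : BenefitFun) {β a b : ℝ} (ha : 0 ≤ a) (hab : a < b)
    (h : ∀ t, a < t → t < b → B.f' t < β) :
    B.f b - β * b < B.f a - β * a := by
  have hsub : Set.Icc a b ⊆ Set.Ici 0 := fun t ht => le_trans ha ht.1
  have hg : ∀ t ∈ Set.Ici (0:ℝ),
      HasDerivWithinAt (fun u => B.f u - β * u) (B.f' t - β) (Set.Ici 0) t := by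
    intro t ht
    exact ((B.hasDeriv t ht).sub (((hasDerivAt_id t).const_mul β).hasDerivWithinAt)).congr_deriv (by ring)
  have hanti : StrictAntiOn (fun u => B.f u - β * u) (Set.Icc a b) := by
    apply strictAntiOn_of_hasDerivWithinAt_neg (f' := fun t => B.f' t - β) (convex_Icc a b)
    · exact fun t ht => ((hg t (hsub ht)).continuousWithinAt).mono hsub
    · exact fun t ht => (hg t (hsub (interior_subset ht))).mono (interior_subset.trans hsub)
    · intro t ht
      rw [interior_Icc] at ht
      exact sub_neg.2 (h t ht.1 ht.2)
  exact hanti (Set.left_mem_Icc.2 hab.le) (Set.right_mem_Icc.2 hab.le) hab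

lemma aux_f'_anti (B : BenefitFun) : StrictAntiOn B.f' (Set.Ici 0) := by
  apply strictAntiOn_of_hasDerivWithinAt_neg (f' := B.f'') (convex_Ici 0)
  · exact fun t ht => (B.hasDeriv' t ht).continuousWithinAt
  · exact fun t ht => (B.hasDeriv' t (interior_subset ht)).mono interior_subset
  · intro t ht
    rw [interior_Ici] at ht
    exact B.f''_neg t ht

theorem stmt10 (B : BenefitFun) (N : ℕ) (hN : 2 ≤ N)
    (κ δ σ : ℝ) (hκ : 0 < κ) (hδ : 0 < δ) (hσ : 0 < σ)
    (hcost : δ + σ < κ) (hκf : κ < B.f' 0)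
    (β : ℝ) (hβ : β = (1 / (N:ℝ)) * κ + (((N:ℝ) - 1) / (N:ℝ)) * (δ + σ))
    (pstar : ℝ) (hp : pstar = (κ + ((N:ℝ) - 1) * σ - δ) / (N:ℝ)) :
    -- (a)
    (pstar + δ = β ∧ β = κ + ((N:ℝ) - 1) * σ - ((N:ℝ) - 1) * pstar
      ∧ ∀ x : Fin N → ℝ, (∀ j, 0 ≤ x j) → ∀ i : Fin N,
          payoffP B κ δ σ pstar x i = B.f (∑ j, x j) - β * (∑ j, x j))
    -- (b)
    ∧ (∀ x : Fin N → ℝ, (∀ j, 0 ≤ x j) →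
        ((∀ i : Fin N, ∀ x' : ℝ, 0 ≤ x' →
            payoffP B κ δ σ pstar (Function.update x i x') i ≤ payoffP B κ δ σ pstar x i)
          ↔ (∑ j, x j) = B.xhat β))
    -- (c)
    ∧ (∀ x : Fin N → ℝ, (∀ j, 0 ≤ x j) →
        (∀ i : Fin N, ∀ x' : ℝ, 0 ≤ x' →
            payoffP B κ δ σ pstar (Function.update x i x') i ≤ payoffP B κ δ σ pstar x i) →
        ∀ i : Fin N, payoffP B κ δ σ pstar x i = B.fstar β) := by
  have hNR : (2:ℝ) ≤ (N:ℝ) := by exact_mod_cast hN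
  have hNpos : (0:ℝ) < (N:ℝ) := by linarith
  have hNne : (N:ℝ) ≠ 0 := ne_of_gt hNpos
  have hβN : β * (N:ℝ) = κ + ((N:ℝ) - 1) * (δ + σ) := by
    rw [hβ]; field_simp
  have hβpos : 0 < β := by nlinarith
  have hβκ : β < κ := by nlinarith
  have hβf : β ≤ B.f' 0 := le_of_lt (lt_trans hβκ hκf)
  have ha1 : pstar + δ = β := by rw [hβ, hp]; field_simp; ring
  have ha2 : β = κ + ((N:ℝ) - 1) * σ - ((N:ℝ) - 1) * pstar := by
    rw [hβ, hp]; field_simp; ring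
  have ha3 : ∀ x : Fin N → ℝ, ∀ i : Fin N,
      payoffP B κ δ σ pstar x i = B.f (∑ j, x j) - β * (∑ j, x j) := by
    intro x i
    unfold payoffP
    rw [Finset.sum_erase_eq_sub (Finset.mem_univ i), hβ, hp]
    field_simp
    ring
  have hxhn : 0 ≤ B.xhat β := B.xhat_nonneg β hβpos hβf
  have hfx : B.f' (B.xhat β) = β := B.xhat_spec β hβpos hβf
  have hanti := aux_f'_anti B
  have hupd : ∀ (x : Fin N → ℝ) (i : Fin N) (x' : ℝ),
      ∑ j, Function.update x i x' j = (∑ j, x j) - x i + x' := by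
    intro x i x'
    rw [Finset.sum_update_of_mem (Finset.mem_univ i), Finset.sdiff_singleton_eq_erase,
      Finset.sum_erase_eq_sub (Finset.mem_univ i)]
    ring
  have hb : ∀ x : Fin N → ℝ, (∀ j, 0 ≤ x j) →
      ((∀ i : Fin N, ∀ x' : ℝ, 0 ≤ x' →
          payoffP B κ δ σ pstar (Function.update x i x') i ≤ payoffP B κ δ σ pstar x i)
        ↔ (∑ j, x j) = B.xhat β) := by
    intro x hx
    have hSnn : 0 ≤ ∑ j, x j := Finset.sum_nonneg fun j _ => hx j
    constructor
    · intro hNE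
      by_contra hne
      rcases lt_or_gt_of_ne hne with hlt | hgt
      · -- sum < xhat
        have i0 : Fin N := ⟨0, by omega⟩
        have hx' : 0 ≤ x i0 + (B.xhat β - ∑ j, x j) := by linarith [hx i0]
        have hle := hNE i0 _ hx'
        rw [ha3, ha3, hupd] at hle
        have harg : (∑ j, x j) - x i0 + (x i0 + (B.xhat β - ∑ j, x j)) = B.xhat β := by ring
        rw [harg] at hle
        have hmono := aux_mono B hSnn hlt (fun t ht1 ht2 => by
          have := hanti (Set.mem_Ici.2 (le_trans hSnn ht1.le)) (Set.mem_Ici.2 hxhn) ht2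
          rw [hfx] at this; exact this)
        linarith
      · -- sum > xhat
        have hSpos : 0 < ∑ j, x j := lt_of_le_of_lt hxhn hgt
        obtain ⟨i, hi⟩ : ∃ i, 0 < x i := by
          by_contra h
          push_neg at h
          have : (∑ j, x j) = 0 :=
            Finset.sum_eq_zero fun j _ => le_antisymm (h j) (hx j)
          linarith
        set t := max ((∑ j, x j) - x i) (B.xhat β) with ht
        have ht1 : B.xhat β ≤ t := le_max_right _ _
        have ht0 : 0 ≤ t := le_trans hxhn ht1
        have htS : t < ∑ j, x j := max_lt (by linarith) hgt
        have hx' : 0 ≤ t - ((∑ j, x j) - x i) := sub_nonneg.2 (le_max_left _ _)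
        have hle := hNE i _ hx'
        rw [ha3, ha3, hupd] at hle
        have harg : (∑ j, x j) - x i + (t - ((∑ j, x j) - x i)) = t := by ring
        rw [harg] at hle
        have hantig := aux_anti B ht0 htS (fun u hu1 hu2 => by
          have := hanti (Set.mem_Ici.2 hxhn) (Set.mem_Ici.2 (le_trans ht0 hu1.le))
            (lt_of_le_of_lt ht1 hu1)
          rw [hfx] at this; exact this)
        linarith
    · intro hS i x' hx'
      rw [ha3, ha3, hupd, hS]
      have hxi : x i ≤ ∑ j, x j :=
        Finset.single_le_sum (fun j _ => hx j) (Finset.mem_univ i)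
      have hnn : 0 ≤ B.xhat β - x i + x' := by
        rw [← hS]; linarith
      exact B.xhat_max β hβpos hβf _ hnn
  refine ⟨⟨ha1, ha2, fun x _ i => ha3 x i⟩, hb, ?_⟩
  intro x hx hNE i
  have hS := (hb x hx).1 hNE
  rw [ha3, hS]
  rfl
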